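/- Let n be a positive integer, A : ℝ → (n×n real matrices) with A(r) symmetric for all r, and ℰ a real number. Let σ : ℝ → (n×n real matrices) be twice differentiable with σ(r) invertible for all r, σ''(r) = (A(r) − ℰ·I)σ(r), and σ(r)ᵀσ'(r) = σ'(r)ᵀσ(r) for all r. Fix r₀ ∈ ℝ and define ψ̃(r) := (σ(r)ᵀ)⁻¹ ∫_{r₀}^{r} σ(s)ᵀσ(s) ds and φ̃(r) := (σ(r)ᵀ)⁻¹. Then ψ̃''(r) = (A(r) − 2U'(r) − ℰ·I)ψ̃(r), where U = σ'σ⁻¹, and the Wronskian W[φ̃,ψ̃](r) := φ̃(r)ᵀψ̃'(r) − φ̃'(r)ᵀψ̃(r) is constant and equal to the identity matrix (equivalently, W[ψ̃,φ̃] ≡ −I). -/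

import Mathlib

open Matrix

namespace SecondSol
variable {n : ℕ}

lemma hasDerivAt_mulM {f g : ℝ → Matrix (Fin n) (Fin n) ℝ}
    {f' g' : Matrix (Fin n) (Fin n) ℝ} {r : ℝ}
    (hf : ∀ i j, HasDerivAt (fun s => f s i j) (f' i j) r)
    (hg : ∀ i j, HasDerivAt (fun s => g s i j) (g' i j) r)
    (i j : Fin n) :
    HasDerivAt (fun s => (f s * g s) i j) ((f' * g r + f r * g') i j) r := by
  simp only [Matrix.mul_apply, Matrix.add_apply]
  rw [← Finset.sum_add_distrib]
  exact HasDerivAt.fun_sum fun k _ => ((hf i k).mul (hg k j))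

lemma differentiableAt_detM {f : ℝ → Matrix (Fin n) (Fin n) ℝ} {r : ℝ}
    (hf : ∀ i j, DifferentiableAt ℝ (fun s => f s i j) r) :
    DifferentiableAt ℝ (fun s => (f s).det) r := by
  simp only [Matrix.det_apply']
  exact DifferentiableAt.fun_sum fun p _ =>
    ((DifferentiableAt.fun_finsetProd fun i _ => hf _ _).const_mul _)

lemma differentiableAt_adjugateM {f : ℝ → Matrix (Fin n) (Fin n) ℝ} {r : ℝ}
    (hf : ∀ i j, DifferentiableAt ℝ (fun s => f s i j) r) (i j : Fin n) :
    DifferentiableAt ℝ (fun s => (f s).adjugate i j) r := by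
  simp only [Matrix.adjugate_apply]
  apply differentiableAt_detM
  intro k l
  simp only [Matrix.updateRow_apply]
  by_cases hk : k = j
  · simp [hk]
  · simp only [hk, if_false]
    exact hf k l

lemma differentiableAt_invM {f : ℝ → Matrix (Fin n) (Fin n) ℝ} {r : ℝ}
    (hf : ∀ i j, DifferentiableAt ℝ (fun s => f s i j) r)
    (hu : IsUnit (f r)) (i j : Fin n) :
    DifferentiableAt ℝ (fun s => (f s)⁻¹ i j) r := by
  simp only [Matrix.inv_def, Matrix.smul_apply, smul_eq_mul, Ring.inverse_eq_inv']
  have hdet : (f r).det ≠ 0 := ((Matrix.isUnit_iff_isUnit_det _).mp hu).ne_zero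
  exact ((differentiableAt_detM hf).inv hdet).mul (differentiableAt_adjugateM hf i j)

lemma hasDerivAt_invM {f fd : ℝ → Matrix (Fin n) (Fin n) ℝ}
    (hf : ∀ r i j, HasDerivAt (fun s => f s i j) (fd r i j) r)
    (hu : ∀ r, IsUnit (f r)) (r : ℝ) (i j : Fin n) :
    HasDerivAt (fun s => (f s)⁻¹ i j) ((-((f r)⁻¹ * fd r * (f r)⁻¹)) i j) r := by
  have hdetu : ∀ s, IsUnit (f s).det := fun s => (Matrix.isUnit_iff_isUnit_det _).mp (hu s)
  set D : Matrix (Fin n) (Fin n) ℝ :=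
    Matrix.of (fun i j => deriv (fun s => (f s)⁻¹ i j) r) with hD
  have hDd : ∀ i j, HasDerivAt (fun s => (f s)⁻¹ i j) (D i j) r := fun i j =>
    (differentiableAt_invM (fun i j => (hf r i j).differentiableAt) (hu r) i j).hasDerivAt
  have key : fd r * (f r)⁻¹ + f r * D = 0 := by
    ext a b
    have h1 : HasDerivAt (fun s => (f s * (f s)⁻¹) a b)
        ((fd r * (f r)⁻¹ + f r * D) a b) r := hasDerivAt_mulM (hf r) hDd a b
    have h2 : (fun s => (f s * (f s)⁻¹) a b) = fun _ => (1 : Matrix (Fin n) (Fin n) ℝ) a b :=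
      funext fun s => by rw [Matrix.mul_nonsing_inv _ (hdetu s)]
    rw [h2] at h1
    have := h1.unique (hasDerivAt_const _ _)
    simp [this]
  have hDval : D = -((f r)⁻¹ * fd r * (f r)⁻¹) := by
    have h3 : f r * D = -(fd r * (f r)⁻¹) := by
      rw [eq_neg_iff_add_eq_zero, add_comm]; exact key
    calc D = ((f r)⁻¹ * f r) * D := by rw [Matrix.nonsing_inv_mul _ (hdetu r), one_mul]
      _ = (f r)⁻¹ * (f r * D) := by rw [Matrix.mul_assoc]
      _ = (f r)⁻¹ * -(fd r * (f r)⁻¹) := by rw [h3]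
      _ = -((f r)⁻¹ * fd r * (f r)⁻¹) := by rw [Matrix.mul_neg, Matrix.mul_assoc]
  rw [← hDval]
  exact hDd i j

lemma hc_tTsT {σ τ : Matrix (Fin n) (Fin n) ℝ} (hστ : σ * τ = 1) : τᵀ * σᵀ = 1 := by
  rw [← Matrix.transpose_mul, hστ, Matrix.transpose_one]

lemma hc1 {σ τ : Matrix (Fin n) (Fin n) ℝ} (hστ : σ * τ = 1)
    (X : Matrix (Fin n) (Fin n) ℝ) : τᵀ * (σᵀ * X) = X := by
  rw [← Matrix.mul_assoc, hc_tTsT hστ, Matrix.one_mul]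

lemma hsd {σ σd τ : Matrix (Fin n) (Fin n) ℝ} (hστ : σ * τ = 1)
    (hw : σᵀ * σd = σdᵀ * σ) : σdᵀ = σᵀ * (σd * τ) := by
  calc σdᵀ = σdᵀ * (σ * τ) := by rw [hστ, Matrix.mul_one]
    _ = (σdᵀ * σ) * τ := by rw [Matrix.mul_assoc]
    _ = (σᵀ * σd) * τ := by rw [hw]
    _ = σᵀ * (σd * τ) := by rw [Matrix.mul_assoc]

lemma hsdT {σ σd τ : Matrix (Fin n) (Fin n) ℝ} (hστ : σ * τ = 1)
    (hw : σᵀ * σd = σdᵀ * σ) (X : Matrix (Fin n) (Fin n) ℝ) :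
    τᵀ * (σdᵀ * X) = σd * (τ * X) := by
  rw [hsd hστ hw]
  simp only [Matrix.mul_assoc]
  rw [hc1 hστ]

lemma alg1 {σ σd τ : Matrix (Fin n) (Fin n) ℝ} (hστ : σ * τ = 1)
    (hw : σᵀ * σd = σdᵀ * σ) : (-(τ * σd * τ))ᵀ * (σᵀ * σ) = -σd := by
  simp only [Matrix.transpose_neg, Matrix.transpose_mul, Matrix.neg_mul, Matrix.mul_assoc,
    neg_inj]
  rw [hc1 hστ, ← hw, hc1 hστ]

lemma alg2 {σ σd τ B : Matrix (Fin n) (Fin n) ℝ} (hστ : σ * τ = 1)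
    (hw : σᵀ * σd = σdᵀ * σ) (hB : Bᵀ = B) :
    (-(((-(τ * σd * τ)) * σd + τ * (B * σ)) * τ + (τ * σd) * (-(τ * σd * τ))))ᵀ
      = ((2 : ℝ) • ((σd * τ) * (σd * τ)) - B) * τᵀ := by
  have e1 : (-(((-(τ * σd * τ)) * σd + τ * (B * σ)) * τ + (τ * σd) * (-(τ * σd * τ))))
      = (2 : ℝ) • (τ * (σd * (τ * (σd * τ)))) - τ * B := by
    simp only [Matrix.neg_mul, Matrix.mul_neg, Matrix.add_mul, Matrix.mul_assoc, hστ,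
      Matrix.mul_one, neg_add_rev, neg_neg, two_smul]
    abel
  rw [e1, Matrix.transpose_sub, Matrix.transpose_smul]
  simp only [Matrix.transpose_mul, Matrix.mul_assoc, smul_mul_assoc, Matrix.sub_mul]
  rw [hB, hsdT hστ hw, hsdT hστ hw]

lemma alg3 {σ σd τ : Matrix (Fin n) (Fin n) ℝ} (hστ : σ * τ = 1)
    (hw : σᵀ * σd = σdᵀ * σ) :
    τ * (-(τ * σd * τ))ᵀ = (-(τ * σd * τ)) * τᵀ := by
  simp only [Matrix.transpose_neg, Matrix.transpose_mul, Matrix.mul_neg, Matrix.neg_mul,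
    Matrix.mul_assoc, neg_inj]
  rw [hsd hστ hw]
  simp only [Matrix.mul_assoc]
  rw [hc1 hστ]

end SecondSol

/-- Paper's equation (14): `ψ̃(r) = (σ(r)ᵀ)⁻¹ ∫_{r₀}^r σᵀσ ds` solves the transformed
equation at the factorization energy, and its Wronskian with `φ̃ = (σᵀ)⁻¹` is
constant, equal to the identity matrix. -/
theorem second_solution_at_factorization_energy
    (n : ℕ) (hn : 0 < n)
    (A : ℝ → Matrix (Fin n) (Fin n) ℝ) (ℰ : ℝ)
    (hA : ∀ r, (A r).IsSymm)
    (σ σd σdd : ℝ → Matrix (Fin n) (Fin n) ℝ)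
    (hσ : ∀ r i j, HasDerivAt (fun s => σ s i j) (σd r i j) r)
    (hσd : ∀ r i j, HasDerivAt (fun s => σd s i j) (σdd r i j) r)
    (hσinv : ∀ r, IsUnit (σ r))
    (hσeq : ∀ r, σdd r = (A r - ℰ • (1 : Matrix (Fin n) (Fin n) ℝ)) * σ r)
    (hwronsk : ∀ r, (σ r)ᵀ * σd r = (σd r)ᵀ * σ r)
    (r₀ : ℝ) :
    let U : ℝ → Matrix (Fin n) (Fin n) ℝ := fun r => σd r * (σ r)⁻¹
    let Ud : ℝ → Matrix (Fin n) (Fin n) ℝ := fun r =>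
      Matrix.of fun i j => deriv (fun s => U s i j) r
    let φt : ℝ → Matrix (Fin n) (Fin n) ℝ := fun r => ((σ r)ᵀ)⁻¹
    let ψt : ℝ → Matrix (Fin n) (Fin n) ℝ := fun r =>
      ((σ r)ᵀ)⁻¹ * Matrix.of fun i j => ∫ s in r₀..r, ((σ s)ᵀ * σ s) i j
    let φtd : ℝ → Matrix (Fin n) (Fin n) ℝ := fun r =>
      Matrix.of fun i j => deriv (fun s => φt s i j) r
    let ψtd : ℝ → Matrix (Fin n) (Fin n) ℝ := fun r =>
      Matrix.of fun i j => deriv (fun s => ψt s i j) r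
    (∀ (r : ℝ) (i j : Fin n),
      deriv (fun t => deriv (fun s => ψt s i j) t) r
        = ((A r - (2 : ℝ) • Ud r - ℰ • (1 : Matrix (Fin n) (Fin n) ℝ)) * ψt r) i j) ∧
    (∀ r : ℝ, (φt r)ᵀ * ψtd r - (φtd r)ᵀ * ψt r = 1) ∧
    (∀ r : ℝ, (ψt r)ᵀ * φtd r - (ψtd r)ᵀ * φt r = -1) := by
  intro U Ud φt ψt φtd ψtd
  set τ : ℝ → Matrix (Fin n) (Fin n) ℝ := fun r => (σ r)⁻¹ with hτ_def
  set τd : ℝ → Matrix (Fin n) (Fin n) ℝ := fun r => -(τ r * σd r * τ r) with hτd_def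
  set τdd : ℝ → Matrix (Fin n) (Fin n) ℝ :=
    fun r => -((τd r * σd r + τ r * σdd r) * τ r + (τ r * σd r) * τd r) with hτdd_def
  set F : ℝ → Matrix (Fin n) (Fin n) ℝ :=
    fun t => Matrix.of fun i j => ∫ s in r₀..t, ((σ s)ᵀ * σ s) i j with hF_def
  have hdetu : ∀ r, IsUnit (σ r).det := fun r => (Matrix.isUnit_iff_isUnit_det _).mp (hσinv r)
  have hστ' : ∀ r, σ r * τ r = 1 := fun r => by
    rw [hτ_def]; exact Matrix.mul_nonsing_inv _ (hdetu r)
  have hτσ' : ∀ r, τ r * σ r = 1 := fun r => by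
    rw [hτ_def]; exact Matrix.nonsing_inv_mul _ (hdetu r)
  have hτder : ∀ r i j, HasDerivAt (fun s => τ s i j) (τd r i j) r := by
    intro r i j
    simp only [hτd_def, hτ_def]
    exact SecondSol.hasDerivAt_invM hσ hσinv r i j
  -- φt
  have hφt_eq : ∀ r, φt r = (τ r)ᵀ := by
    intro r
    show ((σ r)ᵀ)⁻¹ = (τ r)ᵀ
    rw [hτ_def]
    exact (Matrix.transpose_nonsing_inv _).symm
  have hφt' : ∀ r i j, HasDerivAt (fun s => φt s i j) ((τd r)ᵀ i j) r := by
    intro r i j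
    have he : (fun s => φt s i j) = fun s => τ s j i := funext fun s => by rw [hφt_eq s]; rfl
    rw [he]
    exact hτder r j i
  have hφtd_eq : ∀ r, φtd r = (τd r)ᵀ := by
    intro r; ext i j; exact (hφt' r i j).deriv
  -- the integral term
  have hcont : ∀ i j, Continuous fun s => ((σ s)ᵀ * σ s) i j := by
    intro i j
    simp only [Matrix.mul_apply, Matrix.transpose_apply]
    exact continuous_finset_sum _ fun k _ =>
      (continuous_iff_continuousAt.mpr fun s => (hσ s k i).continuousAt).mul
      (continuous_iff_continuousAt.mpr fun s => (hσ s k j).continuousAt)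
  have hFder : ∀ r i j, HasDerivAt (fun t => F t i j) (((σ r)ᵀ * σ r) i j) r := by
    intro r i j
    simp only [hF_def]
    exact ((hcont i j).integral_hasStrictDerivAt r₀ r).hasDerivAt
  have hψt_eq : ∀ s, ψt s = (τ s)ᵀ * F s := by
    intro s
    show ((σ s)ᵀ)⁻¹ * _ = (τ s)ᵀ * F s
    rw [← hφt_eq s, hF_def]
  -- first derivative of ψt
  have hψ' : ∀ r i j, HasDerivAt (fun s => ψt s i j) (((τd r)ᵀ * F r + σ r) i j) r := by
    intro r i j
    have hmul := SecondSol.hasDerivAt_mulM (f := fun s => (τ s)ᵀ) (g := F)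
      (f' := (τd r)ᵀ) (g' := (σ r)ᵀ * σ r) (fun a b => hτder r b a) (hFder r) i j
    have he : (fun s => ψt s i j) = fun s => ((τ s)ᵀ * F s) i j :=
      funext fun s => by rw [hψt_eq s]
    rw [he]
    have hval : (τ r)ᵀ * ((σ r)ᵀ * σ r) = σ r := SecondSol.hc1 (hστ' r) (σ r)
    rw [hval] at hmul
    exact hmul
  have hψtd_eq : ∀ r, ψtd r = (τd r)ᵀ * F r + σ r := by
    intro r; ext i j; exact (hψ' r i j).deriv
  -- derivative of τd
  have hτdder : ∀ r i j, HasDerivAt (fun s => τd s i j) (τdd r i j) r := by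
    intro r i j
    have h1 : ∀ a b, HasDerivAt (fun s => (τ s * σd s) a b)
        ((τd r * σd r + τ r * σdd r) a b) r :=
      fun a b => SecondSol.hasDerivAt_mulM (hτder r) (fun c d => hσd r c d) a b
    have h2 := SecondSol.hasDerivAt_mulM (f := fun s => τ s * σd s) (g := τ)
      (f' := τd r * σd r + τ r * σdd r) (g' := τd r) h1 (hτder r) i j
    have h3 := h2.neg
    have he : (fun s => τd s i j) = fun s => -(((τ s * σd s) * τ s) i j) := by
      funext s
      rw [hτd_def]
      rfl
    rw [he, hτdd_def]
    exact h3
  -- derivative of ψtd-value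
  have hψD' : ∀ r i j, HasDerivAt (fun s => ((τd s)ᵀ * F s + σ s) i j)
      (((τdd r)ᵀ * F r + (τd r)ᵀ * ((σ r)ᵀ * σ r) + σd r) i j) r := by
    intro r i j
    have h1 := SecondSol.hasDerivAt_mulM (f := fun s => (τd s)ᵀ) (g := F)
      (f' := (τdd r)ᵀ) (g' := (σ r)ᵀ * σ r) (fun a b => hτdder r b a) (hFder r) i j
    exact h1.add (hσ r i j)
  -- the Wronskian (second conjunct)
  have hW : ∀ r : ℝ, (φt r)ᵀ * ψtd r - (φtd r)ᵀ * ψt r = 1 := by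
    intro r
    rw [hφtd_eq r, hψtd_eq r, hψt_eq r, hφt_eq r, Matrix.transpose_transpose,
      Matrix.transpose_transpose]
    have key : τ r * (τd r)ᵀ = τd r * (τ r)ᵀ := by
      rw [hτd_def]
      exact SecondSol.alg3 (hστ' r) (hwronsk r)
    calc τ r * ((τd r)ᵀ * F r + σ r) - τd r * ((τ r)ᵀ * F r)
        = τ r * (τd r)ᵀ * F r + τ r * σ r - τd r * (τ r)ᵀ * F r := by
          rw [Matrix.mul_add, Matrix.mul_assoc, Matrix.mul_assoc]
      _ = 1 := by rw [key, hτσ' r]; abel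
  refine ⟨?_, hW, ?_⟩
  · -- the differential equation
    intro r i j
    have e1 : (fun t => deriv (fun s => ψt s i j) t) = fun t => ((τd t)ᵀ * F t + σ t) i j :=
      funext fun t => (hψ' t i j).deriv
    rw [e1, (hψD' r i j).deriv]
    suffices h : (τdd r)ᵀ * F r + (τd r)ᵀ * ((σ r)ᵀ * σ r) + σd r
        = (A r - (2 : ℝ) • Ud r - ℰ • (1 : Matrix (Fin n) (Fin n) ℝ)) * ψt r by rw [h]
    -- value of Ud
    have hUder : ∀ a b, HasDerivAt (fun s => U s a b) ((σdd r * τ r + σd r * τd r) a b) r := by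
      intro a b
      have hmm := SecondSol.hasDerivAt_mulM (f := σd) (g := τ)
        (f' := σdd r) (g' := τd r) (fun c d => hσd r c d) (hτder r) a b
      have he : (fun s => U s a b) = fun s => (σd s * τ s) a b := by
        funext s
        show (σd s * (σ s)⁻¹) a b = _
        rw [hτ_def]
      rw [he]
      exact hmm
    have hUd_eq : Ud r = σdd r * τ r + σd r * τd r := by
      ext a b; exact (hUder a b).deriv
    have hBsym : (A r - ℰ • (1 : Matrix (Fin n) (Fin n) ℝ))ᵀ = A r - ℰ • 1 := by
      rw [Matrix.transpose_sub, Matrix.transpose_smul, Matrix.transpose_one, (hA r)]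
    have hUd2 : Ud r = (A r - ℰ • 1) - (σd r * τ r) * (σd r * τ r) := by
      rw [hUd_eq, hσeq r, hτd_def]
      rw [Matrix.mul_assoc (A r - ℰ • 1) (σ r) (τ r), hστ' r, Matrix.mul_one, Matrix.mul_neg,
        sub_eq_add_neg]
      congr 1
      congr 1
      simp only [Matrix.mul_assoc]
    have hcoef : A r - (2 : ℝ) • Ud r - ℰ • (1 : Matrix (Fin n) (Fin n) ℝ)
        = (2 : ℝ) • ((σd r * τ r) * (σd r * τ r)) - (A r - ℰ • 1) := by
      rw [hUd2]
      module
    rw [hcoef, hψt_eq r]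
    have h1 : (τd r)ᵀ * ((σ r)ᵀ * σ r) = -(σd r) := by
      rw [hτd_def]
      exact SecondSol.alg1 (hστ' r) (hwronsk r)
    have h2 : (τdd r)ᵀ = ((2 : ℝ) • ((σd r * τ r) * (σd r * τ r)) - (A r - ℰ • 1)) * (τ r)ᵀ := by
      simp only [hτdd_def, hτd_def]
      rw [hσeq r]
      exact SecondSol.alg2 (hστ' r) (hwronsk r) hBsym
    rw [h1, h2, Matrix.mul_assoc]
    abel
  · -- third conjunct from the second by transposing
    intro r
    have h := congrArg Matrix.transpose (hW r)
    simp only [Matrix.transpose_sub, Matrix.transpose_mul, Matrix.transpose_transpose,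
      Matrix.transpose_one] at h
    rw [← h]
    abel
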